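/- Let μ, ν : ℝ² → ℝ be continuously differentiable functions such that t·ν(z) + (1−t)·μ(z) > 0 for all t ∈ [0,1] and all z ∈ ℝ². Let v : ℝ² → ℝ² be continuously differentiable with div v(z) = μ(z) − ν(z) for all z, and define v_t(z) := v(z) / (t·ν(z) + (1−t)·μ(z)). Suppose Φ : [0,1] × ℝ² → ℝ² is twice continuously differentiable, with Φ(0, z) = z and ∂_t Φ(t, z) = v_t(Φ(t, z)) for all t ∈ [0,1] and z ∈ ℝ². Then for every z ∈ ℝ², det(D_z Φ(1, z)) · ν(Φ(1, z)) = μ(z); that is, the time-1 flow map φ = Φ(1, ·) pushes the measure μ(z) dz forward to ν(w) dw. -/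

import Mathlib

open MeasureTheory Set

noncomputable section

local notation "E2" => EuclideanSpace ℝ (Fin 2)

private def e (i : Fin 2) : E2 := EuclideanSpace.single i 1

private lemma decomp (x : E2) : x = x 0 • e 0 + x 1 • e 1 := by
  ext i
  fin_cases i <;> simp [e, EuclideanSpace.single_apply]

private lemma det_clm (G : E2 →L[ℝ] E2) :
    LinearMap.det (G : E2 →ₗ[ℝ] E2) = G (e 0) 0 * G (e 1) 1 - G (e 0) 1 * G (e 1) 0 := by
  rw [← LinearMap.det_toMatrix (EuclideanSpace.basisFun (Fin 2) ℝ).toBasis, Matrix.det_fin_two]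
  simp [LinearMap.toMatrix_apply, e, EuclideanSpace.basisFun_apply]; try ring

private lemma trace_clm (G : E2 →L[ℝ] E2) :
    LinearMap.trace ℝ E2 (G : E2 →ₗ[ℝ] E2) = G (e 0) 0 + G (e 1) 1 := by
  rw [LinearMap.trace_eq_matrix_trace ℝ (EuclideanSpace.basisFun (Fin 2) ℝ).toBasis, Matrix.trace_fin_two]
  simp [LinearMap.toMatrix_apply, e, EuclideanSpace.basisFun_apply]; try ring

private lemma clm_app_eq (B : E2 →L[ℝ] E2) (x : E2) (i : Fin 2) :
    B x i = x 0 * B (e 0) i + x 1 * B (e 1) i := by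
  conv_lhs => rw [decomp x]
  simp [mul_comm]

private lemma trace_smulRight (ℓ : E2 →L[ℝ] ℝ) (u : E2) :
    LinearMap.trace ℝ E2 ((ℓ.smulRight u : E2 →L[ℝ] E2) : E2 →ₗ[ℝ] E2) = ℓ u := by
  rw [trace_clm]
  conv_rhs => rw [decomp u]
  simp [mul_comm]

private lemma liouville2 {A : ℝ → E2 →L[ℝ] E2} {A' B : E2 →L[ℝ] E2} {s : Set ℝ} {t : ℝ}
    (hA : HasDerivWithinAt A A' s t) (hAB : A' = B.comp (A t)) :
    HasDerivWithinAt (fun τ => LinearMap.det ((A τ : E2 →ₗ[ℝ] E2)))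
      (LinearMap.trace ℝ E2 (B : E2 →ₗ[ℝ] E2) * LinearMap.det ((A t : E2 →ₗ[ℝ] E2))) s t := by
  have entry : ∀ i j : Fin 2, HasDerivWithinAt (fun τ => A τ (e j) i) (A' (e j) i) s t := by
    intro i j
    have h1 : HasDerivWithinAt (fun τ => A τ (e j)) (A' (e j)) s t := by
      simpa using hA.clm_apply (hasDerivWithinAt_const t s (e j))
    exact (EuclideanSpace.proj i).hasFDerivAt.comp_hasDerivWithinAt t h1
  simp only [det_clm]
  have key := (((entry 0 0).mul (entry 1 1)).sub ((entry 1 0).mul (entry 0 1)))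
  refine key.congr_deriv (Eq.symm ?_)
  rw [trace_clm]
  subst hAB
  simp only [ContinuousLinearMap.comp_apply]
  rw [clm_app_eq B (A t (e 0)) 0, clm_app_eq B (A t (e 0)) 1,
    clm_app_eq B (A t (e 1)) 0, clm_app_eq B (A t (e 1)) 1]
  ring


/-- Moser/Dacorogna–Moser interpolation. If `div v = μ − ν`, the densities
`t ν + (1−t) μ` are positive, and `Φ` is the flow of the time-dependent vector field
`v_t = v / (t ν + (1−t) μ)` with `Φ(0,·) = id`, then the time-1 map `φ = Φ(1,·)` satisfies
`det(Dφ(z)) · ν(φ(z)) = μ(z)`, i.e. `φ` pushes `μ(z) dz` forward to `ν(w) dw`. -/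
theorem moser_flow_pushforward
    (μ ν : E2 → ℝ) (hμ : ContDiff ℝ 1 μ) (hν : ContDiff ℝ 1 ν)
    (hpos : ∀ t ∈ Icc (0:ℝ) 1, ∀ z : E2, 0 < t * ν z + (1 - t) * μ z)
    (v : E2 → E2) (hv : ContDiff ℝ 1 v)
    (hdiv : ∀ z : E2, LinearMap.trace ℝ E2 (fderiv ℝ v z : E2 →ₗ[ℝ] E2) = μ z - ν z)
    (Φ : ℝ × E2 → E2) (hΦ : ContDiff ℝ 2 Φ)
    (hΦ0 : ∀ z : E2, Φ (0, z) = z)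
    (hΦt : ∀ t ∈ Icc (0:ℝ) 1, ∀ z : E2,
      HasDerivWithinAt (fun s => Φ (s, z))
        ((t * ν (Φ (t, z)) + (1 - t) * μ (Φ (t, z)))⁻¹ • v (Φ (t, z)))
        (Icc (0:ℝ) 1) t) :
    ∀ z : E2,
      LinearMap.det (fderiv ℝ (fun w => Φ (1, w)) z : E2 →ₗ[ℝ] E2) * ν (Φ (1, z)) = μ z := by
  intro z
  -- basic differentiability facts
  have hΦd : Differentiable ℝ Φ := hΦ.differentiable (by norm_num)
  set F := fderiv ℝ Φ with hFdef
  have hF : ContDiff ℝ 1 F := hΦ.fderiv_right (by norm_num)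
  have hFd : Differentiable ℝ F := hF.differentiable (by norm_num)
  have hνd : Differentiable ℝ ν := hν.differentiable (by norm_num)
  have hμd : Differentiable ℝ μ := hμ.differentiable (by norm_num)
  have hvd : Differentiable ℝ v := hv.differentiable (by norm_num)
  -- notation
  set ρ : ℝ → E2 → ℝ := fun t w => t * ν w + (1 - t) * μ w with hρdef
  set g : ℝ → E2 → E2 := fun t w => (ρ t w)⁻¹ • v w with hgdef
  set φ : ℝ → E2 := fun t => Φ (t, z) with hφdef
  set A : ℝ → E2 →L[ℝ] E2 := fun t => (F (t, z)).comp (ContinuousLinearMap.inr ℝ ℝ E2)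
    with hAdef
  have hinr : ∀ (t : ℝ) (w : E2),
      HasFDerivAt (fun ζ : E2 => (t, ζ)) (ContinuousLinearMap.inr ℝ ℝ E2) w := by
    intro t w
    exact (hasFDerivAt_const t w).prodMk (hasFDerivAt_id w)
  have hAw : ∀ t : ℝ, HasFDerivAt (fun ζ => Φ (t, ζ)) (A t) z := fun t =>
    ((hΦd (t, z)).hasFDerivAt.comp z (hinr t z))
  -- the time derivative of the curve, and key identity ∂ₜΦ = g ∘ Φ on [0,1]
  have hcurve : ∀ (t : ℝ) (ζ : E2),
      HasDerivAt (fun s => Φ (s, ζ)) (F (t, ζ) ((1:ℝ), (0:E2))) t := by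
    intro t ζ
    exact (hΦd (t, ζ)).hasFDerivAt.comp_hasDerivAt t
      ((hasDerivAt_id t).prodMk (hasDerivAt_const t ζ))
  have hid : ∀ t ∈ Icc (0:ℝ) 1, ∀ ζ : E2, F (t, ζ) ((1:ℝ), (0:E2)) = g t (Φ (t, ζ)) := by
    intro t ht ζ
    have hu : UniqueDiffWithinAt ℝ (Icc (0:ℝ) 1) t := uniqueDiffOn_Icc zero_lt_one t ht
    have e1 := ((hcurve t ζ).hasDerivWithinAt (s := Icc (0:ℝ) 1)).derivWithin hu
    have e2 := (hΦt t ht ζ).derivWithin hu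
    rw [← e1]
    exact e2
  -- derivative of A in time
  have hA' : ∀ t ∈ Icc (0:ℝ) 1, ∀ B : E2 →L[ℝ] E2,
      HasFDerivAt (g t) B (φ t) → HasDerivAt A (B.comp (A t)) t := by
    intro t ht B hgB
    have hFz : HasDerivAt (fun s => F (s, z)) ((fderiv ℝ F (t, z)) ((1:ℝ), (0:E2))) t :=
      (hFd (t, z)).hasFDerivAt.comp_hasDerivAt t
        ((hasDerivAt_id t).prodMk (hasDerivAt_const t z))
    have hL : HasDerivAt A
        ((((fderiv ℝ F (t, z)) ((1:ℝ), (0:E2))).comp (ContinuousLinearMap.inr ℝ ℝ E2))) t := by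
      have := ((ContinuousLinearMap.compL ℝ E2 (ℝ × E2) E2).flip
          (ContinuousLinearMap.inr ℝ ℝ E2)).hasFDerivAt.comp_hasDerivAt t hFz
      simpa [hAdef, Function.comp_def] using this
    -- identify the derivative using symmetry of second derivatives
    have hFz2 : HasFDerivAt (fun ζ => F (t, ζ)) ((fderiv ℝ F (t, z)).comp
        (ContinuousLinearMap.inr ℝ ℝ E2)) z :=
      (hFd (t, z)).hasFDerivAt.comp z (hinr t z)
    have happly : HasFDerivAt (fun ζ => F (t, ζ) ((1:ℝ), (0:E2)))
        (((fderiv ℝ F (t, z)).comp (ContinuousLinearMap.inr ℝ ℝ E2)).flip ((1:ℝ), (0:E2))) z := by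
      have := hFz2.clm_apply (hasFDerivAt_const ((1:ℝ), (0:E2)) z)
      simpa using this
    have hchain : HasFDerivAt (fun ζ => g t (Φ (t, ζ))) (B.comp (A t)) z :=
      HasFDerivAt.comp (g := g t) z hgB (hAw t)
    have heqfun : (fun ζ => F (t, ζ) ((1:ℝ), (0:E2))) = fun ζ => g t (Φ (t, ζ)) :=
      funext (hid t ht)
    have heq : (((fderiv ℝ F (t, z)).comp (ContinuousLinearMap.inr ℝ ℝ E2)).flip
        ((1:ℝ), (0:E2))) = B.comp (A t) := by
      apply HasFDerivAt.unique _ hchain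
      rw [← heqfun]
      exact happly
    have hsymm : ∀ w : E2,
        (fderiv ℝ F (t, z)) ((1:ℝ), (0:E2)) ((0:ℝ), w)
          = (fderiv ℝ F (t, z)) ((0:ℝ), w) ((1:ℝ), (0:E2)) :=
      fun w => second_derivative_symmetric (fun y => (hΦd y).hasFDerivAt)
        (hFd (t, z)).hasFDerivAt _ _
    have : (((fderiv ℝ F (t, z)) ((1:ℝ), (0:E2))).comp (ContinuousLinearMap.inr ℝ ℝ E2))
        = B.comp (A t) := by
      rw [← heq]
      refine ContinuousLinearMap.ext fun w => ?_
      simpa using hsymm w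
    rwa [this] at hL
  -- now the main computation: the function f is constant
  set f : ℝ → ℝ := fun t => ρ t (φ t) * LinearMap.det ((A t : E2 →ₗ[ℝ] E2)) with hfdef
  have hf' : ∀ t ∈ Icc (0:ℝ) 1, HasDerivWithinAt f 0 (Icc (0:ℝ) 1) t := by
    intro t ht
    set w₀ : E2 := φ t with hw₀
    have hρ0 : 0 < ρ t w₀ := hpos t ht w₀
    have hρne : ρ t w₀ ≠ 0 := ne_of_gt hρ0
    -- derivative of w ↦ ρ t w
    set D : E2 →L[ℝ] ℝ := t • fderiv ℝ ν w₀ + (1 - t) • fderiv ℝ μ w₀ with hDdef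
    have hρd : HasFDerivAt (fun w => ρ t w) D w₀ :=
      ((hνd w₀).hasFDerivAt.const_mul t).add ((hμd w₀).hasFDerivAt.const_mul (1 - t))
    have hcinv : HasFDerivAt (fun w => (ρ t w)⁻¹) ((-(ρ t w₀ ^ 2)⁻¹) • D) w₀ :=
      (hasDerivAt_inv hρne).comp_hasFDerivAt w₀ hρd
    set B : E2 →L[ℝ] E2 :=
      (ρ t w₀)⁻¹ • fderiv ℝ v w₀ + ((-(ρ t w₀ ^ 2)⁻¹) • D).smulRight (v w₀) with hBdef
    have hgB : HasFDerivAt (g t) B w₀ := hcinv.smul (hvd w₀).hasFDerivAt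
    -- determinant part
    have hdet := liouville2 ((hA' t ht B hgB).hasDerivWithinAt (s := Icc (0:ℝ) 1)) rfl
    -- density part
    have hφt : HasDerivWithinAt φ (g t w₀) (Icc (0:ℝ) 1) t := hΦt t ht z
    have hνφ : HasDerivWithinAt (fun τ => ν (φ τ)) (fderiv ℝ ν w₀ (g t w₀)) (Icc (0:ℝ) 1) t :=
      (hνd w₀).hasFDerivAt.comp_hasDerivWithinAt t hφt
    have hμφ : HasDerivWithinAt (fun τ => μ (φ τ)) (fderiv ℝ μ w₀ (g t w₀)) (Icc (0:ℝ) 1) t :=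
      (hμd w₀).hasFDerivAt.comp_hasDerivWithinAt t hφt
    have hρφ : HasDerivWithinAt (fun τ => ρ τ (φ τ))
        ((1 * ν w₀ + t * fderiv ℝ ν w₀ (g t w₀))
          + ((0 - 1) * μ w₀ + (1 - t) * fderiv ℝ μ w₀ (g t w₀))) (Icc (0:ℝ) 1) t := by
      exact ((hasDerivWithinAt_id t _).mul hνφ).add
        (((hasDerivWithinAt_const t _ (1:ℝ)).sub (hasDerivWithinAt_id t _)).mul hμφ)
    -- combine
    have key := hρφ.mul hdet
    refine key.congr_deriv (Eq.symm ?_)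
    -- show the total derivative vanishes
    have htrace : LinearMap.trace ℝ E2 (B : E2 →ₗ[ℝ] E2)
        = (ρ t w₀)⁻¹ * (μ w₀ - ν w₀) + (-(ρ t w₀ ^ 2)⁻¹) * D (v w₀) := by
      have hco : ((B : E2 →L[ℝ] E2) : E2 →ₗ[ℝ] E2)
          = (ρ t w₀)⁻¹ • ((fderiv ℝ v w₀ : E2 →L[ℝ] E2) : E2 →ₗ[ℝ] E2)
            + ((((-(ρ t w₀ ^ 2)⁻¹) • D).smulRight (v w₀) : E2 →L[ℝ] E2) : E2 →ₗ[ℝ] E2) := rfl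
      rw [hco, map_add]
      have hms := _root_.map_smul (LinearMap.trace ℝ E2) ((ρ t w₀)⁻¹)
        ((fderiv ℝ v w₀ : E2 →L[ℝ] E2) : E2 →ₗ[ℝ] E2)
      rw [hms, trace_smulRight, hdiv w₀]
      simp [smul_eq_mul]
    have hDg : D (g t w₀) = (ρ t w₀)⁻¹ * D (v w₀) := by
      simp [hgdef, _root_.map_smul, smul_eq_mul]
    rw [htrace]
    rw [show g t w₀ = (ρ t w₀)⁻¹ • v w₀ from rfl] at hνφ hμφ hρφ ⊢
    have hDexp : D (v w₀) = t * fderiv ℝ ν w₀ (v w₀) + (1 - t) * fderiv ℝ μ w₀ (v w₀) := by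
      simp [hDdef, smul_eq_mul]
    have hν' : fderiv ℝ ν w₀ ((ρ t w₀)⁻¹ • v w₀) = (ρ t w₀)⁻¹ * fderiv ℝ ν w₀ (v w₀) := by
      simp [_root_.map_smul, smul_eq_mul]
    have hμ' : fderiv ℝ μ w₀ ((ρ t w₀)⁻¹ • v w₀) = (ρ t w₀)⁻¹ * fderiv ℝ μ w₀ (v w₀) := by
      simp [_root_.map_smul, smul_eq_mul]
    rw [hν', hμ', hDexp]
    have h1 : ρ t w₀ * (ρ t w₀)⁻¹ = 1 := mul_inv_cancel₀ hρne
    have h2 : ρ t w₀ * (ρ t w₀ ^ 2)⁻¹ = (ρ t w₀)⁻¹ := by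
      rw [sq, mul_inv, ← mul_assoc, h1, one_mul]
    generalize hq1 : fderiv ℝ ν w₀ (v w₀) = q1
    generalize hq2 : fderiv ℝ μ w₀ (v w₀) = q2
    generalize hq3 : LinearMap.det ((A t : E2 →ₗ[ℝ] E2)) = q3
    generalize hq4 : (ρ t w₀)⁻¹ = r' at h1 h2
    generalize hq5 : ρ t w₀ = r at h1 h2
    linear_combination (q3 * (t * q1 + (1 - t) * q2) * h2) + (q3 * (ν w₀ - μ w₀)) * h1
  -- f is constant on [0,1]
  have hcont : ContinuousOn f (Icc (0:ℝ) 1) := fun t ht => (hf' t ht).continuousWithinAt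
  have hconst : f 1 = f 0 := by
    have := constant_of_has_deriv_right_zero hcont (fun x hx =>
      (hf' x (Ico_subset_Icc_self hx)).mono_of_mem_nhdsWithin (Icc_mem_nhdsGE_of_mem hx))
    exact this 1 (right_mem_Icc.mpr zero_le_one)
  -- endpoints
  have hA0 : A 0 = ContinuousLinearMap.id ℝ E2 := by
    have h1 : HasFDerivAt (fun ζ => Φ (0, ζ)) (A 0) z := hAw 0
    have h2 : (fun ζ : E2 => Φ (0, ζ)) = fun ζ => ζ := funext hΦ0
    rw [h2] at h1
    exact h1.unique (hasFDerivAt_id z)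
  have hf0 : f 0 = μ z := by
    simp [hfdef, hA0, hρdef, hφdef, hΦ0 z]
  have hf1 : f 1 = LinearMap.det ((A 1 : E2 →ₗ[ℝ] E2)) * ν (Φ (1, z)) := by
    simp [hfdef, hρdef, hφdef]
    ring
  have hfd1 : fderiv ℝ (fun w => Φ (1, w)) z = A 1 := (hAw 1).fderiv
  rw [hfd1, ← hf1, hconst, hf0]
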